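/- Equivalence classes of probabilities of causation, Case 2 (padding the treatment variable): fix integers 1 ≤ k ≤ m < n and data arrays e, o : {1,…,m} × {1,…,m} → ℝ. Let S_m be the set of real numbers of the form P(⋂_{j=1}^{k} {Y_j = j}) where the counterfactual model ranges over all probability spaces (Ω, 𝒜, P) with a measurable treatment X' : Ω → {1,…,m} and measurable potential outcomes Y_j : Ω → {1,…,m} (j ∈ {1,…,m}), observed outcome Y(ω) = Y_{X'(ω)}(ω), satisfying P(Y_j = i) = e(j,i) and P(X' = j, Y = i) = o(j,i) for all j, i ∈ {1,…,m}. Let S_n be the analogously defined set for models with treatment X : Ω → {1,…,n} and potential outcomes Y_l : Ω → {1,…,m} for l ∈ {1,…,n}, subject to the additional constraints that for every l ∈ {m+1,…,n}: P(X = l) = 0, P(Y_l = j) = 0 for all j ∈ {1,…,m−1}, and P(Y_l = m) = 1, together with P(Y_j = i) = e(j,i) and P(X = j, Y = i) = o(j,i) for all j, i ∈ {1,…,m}. Then S_n = S_m; consequently the tight bounds on P(⋂_{j=1}^{k} {Y_j = j}) computed from the padded data coincide with those computed from the original data. -/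
import Mathlib


open MeasureTheory

theorem equivalence_class_treatment_padding
    (n m k : ℕ) (hk1 : 1 ≤ k) (hkm : k ≤ m) (hmn : m < n)
    (e o : ℕ → ℕ → ℝ) :
    {r : ℝ | ∃ (Ω : Type) (_ : MeasurableSpace Ω) (P : Measure Ω)
        (_ : IsProbabilityMeasure P) (X : Ω → ℕ) (Y : ℕ → Ω → ℕ),
      Measurable X ∧ (∀ j, Measurable (Y j)) ∧
      (∀ ω, X ω ∈ Finset.Icc 1 n) ∧
      (∀ j ω, Y j ω ∈ Finset.Icc 1 m) ∧
      (∀ l ∈ Finset.Icc (m+1) n, (P {ω | X ω = l}).toReal = 0) ∧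
      (∀ l ∈ Finset.Icc (m+1) n, ∀ j ∈ Finset.Icc 1 (m-1),
        (P {ω | Y l ω = j}).toReal = 0) ∧
      (∀ l ∈ Finset.Icc (m+1) n, (P {ω | Y l ω = m}).toReal = 1) ∧
      (∀ j ∈ Finset.Icc 1 m, ∀ i ∈ Finset.Icc 1 m,
        (P {ω | Y j ω = i}).toReal = e j i) ∧
      (∀ j ∈ Finset.Icc 1 m, ∀ i ∈ Finset.Icc 1 m,
        (P {ω | X ω = j ∧ Y (X ω) ω = i}).toReal = o j i) ∧
      r = (P (⋂ j ∈ Finset.Icc 1 k, {ω | Y j ω = j})).toReal} =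
    {r : ℝ | ∃ (Ω : Type) (_ : MeasurableSpace Ω) (P : Measure Ω)
        (_ : IsProbabilityMeasure P) (X : Ω → ℕ) (Y : ℕ → Ω → ℕ),
      Measurable X ∧ (∀ j, Measurable (Y j)) ∧
      (∀ ω, X ω ∈ Finset.Icc 1 m) ∧
      (∀ j ω, Y j ω ∈ Finset.Icc 1 m) ∧
      (∀ j ∈ Finset.Icc 1 m, ∀ i ∈ Finset.Icc 1 m,
        (P {ω | Y j ω = i}).toReal = e j i) ∧
      (∀ j ∈ Finset.Icc 1 m, ∀ i ∈ Finset.Icc 1 m,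
        (P {ω | X ω = j ∧ Y (X ω) ω = i}).toReal = o j i) ∧
      r = (P (⋂ j ∈ Finset.Icc 1 k, {ω | Y j ω = j})).toReal} := by

  have hm1 : 1 ≤ m := hk1.trans hkm
  apply Set.Subset.antisymm
  · rintro r ⟨Ω, mΩ, P, hP, X, Y, hX, hY, hXr, hYr, hXnull, hYnull0, hYnull1, he, ho, hr⟩
    refine ⟨Ω, mΩ, P, hP, fun ω => if X ω ≤ m then X ω else 1, Y, ?_, hY, ?_, hYr, he, ?_, hr⟩
    · exact Measurable.ite (measurableSet_le hX measurable_const) hX measurable_const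
    · intro ω
      have := hXr ω
      simp only [Finset.mem_Icc] at this ⊢
      split <;> omega
    · have hN : P {ω | ¬ X ω = (if X ω ≤ m then X ω else 1)} = 0 := by
        have hsub : {ω | ¬ X ω = (if X ω ≤ m then X ω else 1)} ⊆
            ⋃ l ∈ Finset.Icc (m+1) n, {ω | X ω = l} := by
          intro ω hω
          simp only [Set.mem_setOf_eq] at hω
          by_cases h : X ω ≤ m
          · simp [h] at hω
          · refine Set.mem_biUnion (show X ω ∈ Finset.Icc (m+1) n from ?_) rfl
            have := hXr ω
            simp only [Finset.mem_Icc] at this ⊢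
            omega
        refine measure_mono_null hsub ?_
        refine (measure_biUnion_null_iff (Finset.Icc (m+1) n).countable_toSet).mpr ?_
        intro l hl
        have h0 := hXnull l hl
        have hne : P {ω | X ω = l} ≠ ⊤ := (measure_lt_top P _).ne
        rcases (ENNReal.toReal_eq_zero_iff _).mp h0 with h | h
        · exact h
        · exact absurd h hne
      intro j hj i hi
      rw [← ho j hj i hi]
      congr 1
      apply measure_congr
      rw [MeasureTheory.ae_eq_set]
      constructor <;> refine measure_mono_null ?_ hN <;> rintro ω ⟨⟨h1, h2⟩, h3⟩ <;>
        simp only [Set.mem_setOf_eq] at * <;> intro heq <;> exact h3 ⟨heq ▸ h1, heq ▸ h2⟩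
  · rintro r ⟨Ω, mΩ, P, hP, X, Y, hX, hY, hXr, hYr, he, ho, hr⟩
    refine ⟨Ω, mΩ, P, hP, X, fun l => if l ≤ m then Y l else fun _ => m,
      hX, ?_, ?_, ?_, ?_, ?_, ?_, ?_, ?_, ?_⟩
    · intro j
      dsimp only
      split
      · exact hY j
      · exact measurable_const
    · intro ω
      have := hXr ω
      simp only [Finset.mem_Icc] at this ⊢
      omega
    · intro j ω
      dsimp only
      split
      · exact hYr j ω
      · simp only [Finset.mem_Icc]
        omega
    · intro l hl
      have : {ω | X ω = l} = ∅ := by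
        ext ω
        have := hXr ω
        simp only [Finset.mem_Icc] at this hl
        simp only [Set.mem_setOf_eq, Set.mem_empty_iff_false, iff_false]
        omega
      simp [this]
    · intro l hl j hj
      have hlm : ¬ l ≤ m := by simp only [Finset.mem_Icc] at hl; omega
      have : {ω | (if l ≤ m then Y l else fun _ => m) ω = j} = ∅ := by
        ext ω
        simp only [hlm, if_false, Set.mem_setOf_eq, Set.mem_empty_iff_false, iff_false]
        simp only [Finset.mem_Icc] at hj
        omega
      simp [this]
    · intro l hl
      have hlm : ¬ l ≤ m := by simp only [Finset.mem_Icc] at hl; omega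
      have : {ω | (if l ≤ m then Y l else fun _ => m) ω = m} = Set.univ := by
        ext ω
        simp [hlm]
      simp [this]
    · intro j hj i hi
      have hjm : j ≤ m := (Finset.mem_Icc.mp hj).2
      rw [← he j hj i hi]
      congr 1
      simp [hjm]
    · intro j hj i hi
      have hjm : j ≤ m := (Finset.mem_Icc.mp hj).2
      rw [← ho j hj i hi]
      congr 2
      ext ω
      simp only [Set.mem_setOf_eq]
      constructor <;> rintro ⟨h1, h2⟩ <;> refine ⟨h1, ?_⟩
      · rw [h1] at h2 ⊢; simpa [hjm] using h2
      · rw [h1] at h2 ⊢; simpa [hjm] using h2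
    · rw [hr]
      have hset : (⋂ j ∈ Finset.Icc 1 k, {ω | Y j ω = j}) =
          ⋂ j ∈ Finset.Icc 1 k, {ω | (fun l => if l ≤ m then Y l else fun _ => m) j ω = j} := by
        apply Set.iInter₂_congr
        intro j hj
        have : j ≤ m := le_trans (Finset.mem_Icc.mp hj).2 hkm
        simp [this]
      rw [hset]
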